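/- Let p ∈ (0,1), k̃ ∈ ℝ, K > 0, and define f(t,x,y) = e^{k̃ t}(x + y)^p on ℝ₊³. Then for every y > 0, f satisfies: sup over π ∈ ℝ of [ π b_L f_x + (ρ b_L σ_I/σ_L) y f_y + (σ_L² π²/2) f_{xx} + π ρ σ_I σ_L y f_{xy} + (ρ² σ_I²/2) y² f_{yy} ] = (p/(1−p)) · (b_L²/(2σ_L²)) f(t,x,y), for all t ≥ 0, x ≥ 0 with x + y > 0. -/

import Mathlib

open Filter

private lemma aux_deriv (E q c u : ℝ) (h : 0 < u + c) :
    deriv (fun u' : ℝ => E * (u' + c) ^ q) u = E * (q * (u + c) ^ (q - 1)) := by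
  have h1 : HasDerivAt (fun u' : ℝ => (u' + c) ^ q) (q * (u + c) ^ (q - 1) * 1) u :=
    (Real.hasDerivAt_rpow_const (Or.inl h.ne')).comp (h := fun u' : ℝ => u' + c) u ((hasDerivAt_id u).add_const c)
  simpa [mul_comm, mul_assoc, mul_left_comm] using (h1.const_mul E).deriv

private lemma aux_ev (c u : ℝ) (h : 0 < u + c) : ∀ᶠ u' in nhds u, 0 < u' + c := by
  have hc : ContinuousAt (fun u' : ℝ => u' + c) u := by fun_prop
  exact hc.tendsto.eventually (eventually_gt_nhds h)

private lemma aux_deriv2 (E q c u : ℝ) (h : 0 < u + c) :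
    deriv (fun u' => deriv (fun u'' : ℝ => E * (u'' + c) ^ q) u') u
      = E * (q * ((q - 1) * (u + c) ^ (q - 2))) := by
  have hev : (fun u' => deriv (fun u'' : ℝ => E * (u'' + c) ^ q) u')
      =ᶠ[nhds u] fun u' => (E * q) * (u' + c) ^ (q - 1) := by
    filter_upwards [aux_ev c u h] with u' hu'
    rw [aux_deriv E q c u' hu']; ring
  rw [hev.deriv_eq, aux_deriv (E * q) (q - 1) c u h]
  rw [show q - 1 - 1 = q - 2 by ring]; ring

private lemma aux_mixed (E q x y : ℝ) (h : 0 < x + y) :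
    deriv (fun y' => deriv (fun x' : ℝ => E * (x' + y') ^ q) x) y
      = E * (q * ((q - 1) * (x + y) ^ (q - 2))) := by
  have h' : 0 < y + x := by linarith
  have hev : (fun y' => deriv (fun x' : ℝ => E * (x' + y') ^ q) x)
      =ᶠ[nhds y] fun y' => (E * q) * (y' + x) ^ (q - 1) := by
    filter_upwards [aux_ev x y h'] with y' hy'
    rw [aux_deriv E q y' x (by linarith)]; rw [add_comm x y']; ring
  rw [hev.deriv_eq, aux_deriv (E * q) (q - 1) x y h']
  rw [show q - 1 - 1 = q - 2 by ring, add_comm y x]; ring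

private lemma aux_derivR (E q c u : ℝ) (h : 0 < c + u) :
    deriv (fun u' : ℝ => E * (c + u') ^ q) u = E * (q * (c + u) ^ (q - 1)) := by
  simp_rw [add_comm c]
  exact aux_deriv E q c u (by linarith)

private lemma aux_deriv2R (E q c u : ℝ) (h : 0 < c + u) :
    deriv (fun u' => deriv (fun u'' : ℝ => E * (c + u'') ^ q) u') u
      = E * (q * ((q - 1) * (c + u) ^ (q - 2))) := by
  simp_rw [add_comm c]
  exact aux_deriv2 E q c u (by linarith)

theorem barrier_function_supersolution_identity
    (p k bL σL σI ρ : ℝ) (hp : p ∈ Set.Ioo (0:ℝ) 1)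
    (hσL : 0 < σL) (hσI : 0 < σI) (hρ : ρ ∈ Set.Ioo (-1:ℝ) 1)
    (f : ℝ → ℝ → ℝ → ℝ)
    (hf : ∀ t x y : ℝ, f t x y = Real.exp (k * t) * (x + y) ^ p)
    (t x y : ℝ) (ht : 0 ≤ t) (hx : 0 ≤ x) (hy : 0 < y) (hxy : 0 < x + y) :
    sSup {z : ℝ | ∃ π : ℝ,
        z = π * bL * deriv (fun x' => f t x' y) x
          + ρ * bL * σI / σL * y * deriv (fun y' => f t x y') y
          + σL ^ 2 * π ^ 2 / 2 * deriv (fun x' => deriv (fun x'' => f t x'' y) x') x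
          + π * ρ * σI * σL * y * deriv (fun y' => deriv (fun x' => f t x' y') x) y
          + ρ ^ 2 * σI ^ 2 / 2 * y ^ 2 * deriv (fun y' => deriv (fun y'' => f t x y'') y') y}
      = p / (1 - p) * (bL ^ 2 / (2 * σL ^ 2)) * f t x y := by
  obtain ⟨hp0, hp1⟩ := hp
  obtain ⟨hρ0, hρ1⟩ := hρ
  set E := Real.exp (k * t) with hE
  have hEpos : 0 < E := Real.exp_pos _
  set s := x + y with hs
  simp only [hf]
  rw [aux_deriv E p y x hxy, aux_derivR E p x y hxy, aux_deriv2 E p y x hxy,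
    aux_mixed E p x y hxy, aux_deriv2R E p x y hxy]
  set v : ℝ := s ^ (p - 2) with hv
  have hvpos : 0 < v := Real.rpow_pos_of_pos hxy _
  have hu : s ^ (p - 1) = v * s := by
    rw [hv, show p - 1 = (p - 2) + 1 by ring, Real.rpow_add hxy, Real.rpow_one]
  have hw : s ^ p = v * s * s := by
    rw [hv, show p = (p - 2) + 1 + 1 by ring, Real.rpow_add hxy, Real.rpow_add hxy,
      Real.rpow_one]
    rw [show p - 2 + 1 + 1 - 2 = p - 2 by ring]
  rw [hu, hw]
  -- the quadratic in π
  set Q : ℝ → ℝ := fun π =>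
    π * bL * (E * (p * (v * s)))
      + ρ * bL * σI / σL * y * (E * (p * (v * s)))
      + σL ^ 2 * π ^ 2 / 2 * (E * (p * ((p - 1) * v)))
      + π * ρ * σI * σL * y * (E * (p * ((p - 1) * v)))
      + ρ ^ 2 * σI ^ 2 / 2 * y ^ 2 * (E * (p * ((p - 1) * v))) with hQ
  set πs : ℝ := bL * s / (σL ^ 2 * (1 - p)) - ρ * σI * y / σL with hπs
  set M : ℝ := p / (1 - p) * (bL ^ 2 / (2 * σL ^ 2)) * (E * (v * s * s)) with hM
  have h1p : (1 : ℝ) - p ≠ 0 := by linarith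
  have hσL' : σL ≠ 0 := hσL.ne'
  have hkey : ∀ π : ℝ, M - Q π = σL ^ 2 / 2 * (E * (p * ((1 - p) * v))) * (π - πs) ^ 2 := by
    intro π
    rw [hM, hQ, hπs]
    field_simp
    ring
  show sSup {z : ℝ | ∃ π : ℝ, z = Q π} = M
  clear_value E s v Q πs M
  have hgreat : IsGreatest {z : ℝ | ∃ π : ℝ, z = Q π} M := by
    constructor
    · exact ⟨πs, by have := hkey πs; simp at this; linarith⟩
    · rintro z ⟨π, rfl⟩
      show Q π ≤ M
      have h := hkey π
      have hpos : 0 ≤ σL ^ 2 / 2 * (E * (p * ((1 - p) * v))) * (π - πs) ^ 2 := by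
        have : 0 < E * (p * ((1 - p) * v)) :=
          mul_pos hEpos (mul_pos hp0 (mul_pos (by linarith) hvpos))
        positivity
      linarith
  exact hgreat.csSup_eq
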